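/- Let T be a finite group, n ∈ ℕ, and define the Jucys–Murphy element of the wreath product S_{n+1}(T) by J_{n+1}^θ := A_{C'} − A_{C}, the difference of the indicator (sum over elements) of the (θ,2)-cycle conjugacy class C' of S_{n+1}(T) and that of the (θ,2)-cycle class C of S_n(T). Then J_{n+1}^θ = J_{n+1}·(A_θ,(n+1)) = (A_θ,(n+1))·J_{n+1}, where J_{n+1} = J_{n+1}^{{e_T}} and (A_θ,(n+1)) = Σ_{x ∈ C_θ} (x,(n+1)). -/

import Mathlib

/-- The action of `S_n` on `T^n` by permuting coordinates. -/
def permAct (T : Type*) [Group T] (n : ℕ) : Equiv.Perm (Fin n) →* MulAut (Fin n → T) where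
  toFun σ :=
    { toFun := fun f => f ∘ σ.symm
      invFun := fun f => f ∘ σ
      left_inv := fun f => by ext i; simp
      right_inv := fun f => by ext i; simp
      map_mul' := fun f g => rfl }
  map_one' := rfl
  map_mul' := fun σ τ => rfl

/-- The wreath product `S_n(T) = T^n ⋊ S_n`. -/
abbrev Wreath (T : Type*) [Group T] (n : ℕ) :=
  SemidirectProduct (Fin n → T) (Equiv.Perm (Fin n)) (permAct T n)

variable {T : Type*} [Group T] [Fintype T]

open Classical in
/-- The conjugacy class `C_θ` of `t` in `T`, as a finset. -/
noncomputable def conjCl (t : T) : Finset T := Finset.univ.filter (fun x => IsConj t x)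

/-- The element `(y⁻¹,(i))·(xy,(j))·(i j)` of the wreath product. -/
def wElt {n : ℕ} (i j : Fin n) (y x : T) : Wreath T n :=
  ⟨fun m => if m = i then y⁻¹ else if m = j then x * y else 1, Equiv.swap i j⟩

/-- The indicator `A_{C'}` of the `(θ,2)`-cycle conjugacy class of `S_{n+1}(T)`
in `ℂ[S_{n+1}(T)]`. -/
noncomputable def classSumBig (n : ℕ) (t : T) : MonoidAlgebra ℂ (Wreath T (n + 1)) :=
  ∑ i : Fin (n + 1), ∑ j : Fin (n + 1),
    if i < j then ∑ y : T, ∑ x ∈ conjCl t, MonoidAlgebra.single (wElt i j y x) (1 : ℂ)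
    else 0

/-- The indicator `A_C` of the `(θ,2)`-cycle conjugacy class of `S_n(T)`, viewed inside
`ℂ[S_{n+1}(T)]`. -/
noncomputable def classSumSmall (n : ℕ) (t : T) : MonoidAlgebra ℂ (Wreath T (n + 1)) :=
  ∑ i : Fin n, ∑ j : Fin n,
    if i < j then
      ∑ y : T, ∑ x ∈ conjCl t,
        MonoidAlgebra.single (wElt i.castSucc j.castSucc y x) (1 : ℂ)
    else 0

/-- The Jucys–Murphy element `J_{n+1}^θ = A_{C'} − A_C` of the wreath product. -/
noncomputable def JMw (n : ℕ) (t : T) : MonoidAlgebra ℂ (Wreath T (n + 1)) :=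
  classSumBig n t - classSumSmall n t

/-- The element `(A_θ, (n+1)) = Σ_{x ∈ C_θ} (x, (n+1))`. -/
noncomputable def AthetaLast (n : ℕ) (t : T) : MonoidAlgebra ℂ (Wreath T (n + 1)) :=
  ∑ x ∈ conjCl t,
    MonoidAlgebra.single (⟨fun m => if m = Fin.last n then x else 1, 1⟩ : Wreath T (n + 1))
      (1 : ℂ)

lemma conjCl_one : conjCl (1 : T) = {1} := by
  classical
  ext x
  simp [conjCl, isConj_iff, eq_comm]

lemma JMw_eq_sum (n : ℕ) (t : T) :
    JMw n t = ∑ i : Fin n, ∑ y : T, ∑ x ∈ conjCl t,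
      MonoidAlgebra.single (wElt i.castSucc (Fin.last n) y x) (1 : ℂ) := by
  have hbig : classSumBig n t = classSumSmall n t + ∑ i : Fin n, ∑ y : T, ∑ x ∈ conjCl t,
      MonoidAlgebra.single (wElt i.castSucc (Fin.last n) y x) (1 : ℂ) := by
    unfold classSumBig classSumSmall
    rw [Fin.sum_univ_castSucc]
    have hlast : ∑ j : Fin (n + 1),
        (if Fin.last n < j then ∑ y : T, ∑ x ∈ conjCl t,
          MonoidAlgebra.single (wElt (Fin.last n) j y x) (1 : ℂ) else 0) = 0 := by
      apply Finset.sum_eq_zero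
      intro j _
      rw [if_neg (not_lt.mpr (Fin.le_last j))]
    rw [hlast, add_zero]
    rw [← Finset.sum_add_distrib]
    apply Finset.sum_congr rfl
    intro i _
    rw [Fin.sum_univ_castSucc, if_pos (Fin.castSucc_lt_last i)]
    congr 1
  rw [JMw, hbig]
  abel

lemma permAct_apply {n : ℕ} (σ : Equiv.Perm (Fin n)) (f : Fin n → T) :
    permAct T n σ f = f ∘ σ.symm := rfl

lemma wElt_mul_delta {n : ℕ} (i : Fin n) (y x : T) :
    wElt i.castSucc (Fin.last n) y 1 *
      (⟨fun m => if m = Fin.last n then x else 1, 1⟩ : Wreath T (n + 1)) =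
    wElt i.castSucc (Fin.last n) (x⁻¹ * y) x := by
  have hne : i.castSucc ≠ Fin.last n := Fin.ne_of_lt (Fin.castSucc_lt_last i)
  refine SemidirectProduct.ext ?_ ?_
  · funext m
    simp only [SemidirectProduct.mul_left, wElt, Pi.mul_apply]
    simp only [permAct_apply, Function.comp_apply, Equiv.symm_swap]
    rcases eq_or_ne m i.castSucc with h | h
    · subst h
      rw [if_pos rfl, if_pos rfl, Equiv.swap_apply_left, if_pos rfl]
      group
    · rcases eq_or_ne m (Fin.last n) with h' | h'
      · subst h'
        rw [if_neg h, if_pos rfl, if_neg h, if_pos rfl,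
          Equiv.swap_apply_right, if_neg hne]
        group
      · rw [if_neg h, if_neg h', if_neg h, if_neg h',
          Equiv.swap_apply_of_ne_of_ne h h', if_neg h', one_mul]
  · simp [SemidirectProduct.mul_right, wElt]

lemma delta_mul_wElt {n : ℕ} (i : Fin n) (y x : T) :
    (⟨fun m => if m = Fin.last n then x else 1, 1⟩ : Wreath T (n + 1)) *
      wElt i.castSucc (Fin.last n) y 1 =
    wElt i.castSucc (Fin.last n) y x := by
  have hne : i.castSucc ≠ Fin.last n := Fin.ne_of_lt (Fin.castSucc_lt_last i)
  refine SemidirectProduct.ext ?_ ?_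
  · funext m
    simp only [SemidirectProduct.mul_left, wElt, map_one, MulAut.one_apply, Pi.mul_apply]
    rcases eq_or_ne m i.castSucc with h | h
    · subst h
      rw [if_neg hne, if_pos rfl, if_pos rfl, one_mul]
    · rcases eq_or_ne m (Fin.last n) with h' | h'
      · subst h'
        rw [if_pos rfl, if_neg h, if_pos rfl, if_neg h, if_pos rfl, one_mul]
      · rw [if_neg h', if_neg h, if_neg h', if_neg h, if_neg h', one_mul]
  · simp [SemidirectProduct.mul_right, wElt]

/-- `J_{n+1}^θ = J_{n+1}·(A_θ,(n+1)) = (A_θ,(n+1))·J_{n+1}` where `J_{n+1} = J_{n+1}^{e_T}`. -/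
theorem JMw_eq_mul (n : ℕ) (t : T) :
    JMw n t = JMw n (1 : T) * AthetaLast n t ∧
    JMw n t = AthetaLast n t * JMw n (1 : T) := by
  rw [JMw_eq_sum n t, JMw_eq_sum n 1, conjCl_one, AthetaLast]
  simp only [Finset.sum_singleton]
  constructor
  · symm
    rw [Finset.sum_mul]
    apply Finset.sum_congr rfl
    intro i _
    rw [Finset.sum_mul]
    calc ∑ y : T, (MonoidAlgebra.single (wElt i.castSucc (Fin.last n) y 1) (1 : ℂ)) *
          ∑ x ∈ conjCl t, MonoidAlgebra.single
            (⟨fun m => if m = Fin.last n then x else 1, 1⟩ : Wreath T (n + 1)) (1 : ℂ)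
        = ∑ y : T, ∑ x ∈ conjCl t,
            MonoidAlgebra.single (wElt i.castSucc (Fin.last n) (x⁻¹ * y) x) (1 : ℂ) := by
          apply Finset.sum_congr rfl
          intro y _
          rw [Finset.mul_sum]
          simp only [MonoidAlgebra.single_mul_single, one_mul, wElt_mul_delta]
      _ = ∑ x ∈ conjCl t, ∑ y : T,
            MonoidAlgebra.single (wElt i.castSucc (Fin.last n) (x⁻¹ * y) x) (1 : ℂ) :=
          Finset.sum_comm
      _ = ∑ x ∈ conjCl t, ∑ y : T,
            MonoidAlgebra.single (wElt i.castSucc (Fin.last n) y x) (1 : ℂ) := by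
          apply Finset.sum_congr rfl
          intro x _
          exact Fintype.sum_equiv (Equiv.mulLeft x⁻¹) _ _ (fun y => by simp)
      _ = ∑ y : T, ∑ x ∈ conjCl t,
            MonoidAlgebra.single (wElt i.castSucc (Fin.last n) y x) (1 : ℂ) :=
          Finset.sum_comm
  · rw [Finset.mul_sum]
    apply Finset.sum_congr rfl
    intro i _
    rw [Finset.mul_sum]
    apply Finset.sum_congr rfl
    intro y _
    rw [Finset.sum_mul]
    apply Finset.sum_congr rfl
    intro x _
    rw [MonoidAlgebra.single_mul_single, one_mul, delta_mul_wElt]
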